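/- Let G be a Polish group acting continuously by isometries on metric spaces (X, d_X) and (Y, d_Y), and suppose both quotient pseudometric spaces G⫷X and G⫷Y are totally bounded. If moreover for every open neighborhood U of the identity in G there is a finite set F ⊆ G with G = UFU (i.e., G is Roelcke-precompact), then the quotient of the diagonal action on X × Y (with the sum metric) is totally bounded. -/

import Mathlib

open scoped Topology

/-- if a Roelcke-precompact Polish group `G` acts continuously by isometries on
metric spaces `X` and `Y` with totally bounded quotient pseudometrics, then the quotient of
the diagonal action on `X × Y` (with the sum metric) is totally bounded. -/
theorem stmt_7 {G X Y : Type*} [Group G] [TopologicalSpace G] [IsTopologicalGroup G]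
    [PolishSpace G] [MetricSpace X] [MetricSpace Y] [MulAction G X] [MulAction G Y]
    (hcontX : Continuous (fun p : G × X => p.1 • p.2))
    (hcontY : Continuous (fun p : G × Y => p.1 • p.2))
    (hisoX : ∀ (g : G) (x x' : X), dist (g • x) (g • x') = dist x x')
    (hisoY : ∀ (g : G) (y y' : Y), dist (g • y) (g • y') = dist y y')
    (htbX : ∀ ε > (0:ℝ), ∃ X₀ : Finset X, ∀ x : X, ∃ x₀ ∈ X₀, ∃ g : G, dist (g • x) x₀ < ε)
    (htbY : ∀ ε > (0:ℝ), ∃ Y₀ : Finset Y, ∀ y : Y, ∃ y₀ ∈ Y₀, ∃ g : G, dist (g • y) y₀ < ε)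
    (hRoelcke : ∀ U ∈ 𝓝 (1 : G), ∃ F : Finset G, ∀ g : G,
      ∃ u ∈ U, ∃ f ∈ F, ∃ v ∈ U, g = u * f * v) :
    ∀ ε > (0:ℝ), ∃ Z₀ : Finset (X × Y), ∀ z : X × Y, ∃ z₀ ∈ Z₀, ∃ g : G,
      dist (g • z.1) z₀.1 + dist (g • z.2) z₀.2 < ε := by
  intro ε hε
  classical
  obtain ⟨X₀, hX₀⟩ := htbX (ε/4) (by linarith)
  obtain ⟨Y₀, hY₀⟩ := htbY (ε/4) (by linarith)
  have h1 : ∀ x₀ : X, ∀ᶠ g : G in 𝓝 1, dist (g • x₀) x₀ < ε/4 := by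
    intro x₀
    have hc : Continuous fun g : G => dist (g • x₀) x₀ :=
      (hcontX.comp (continuous_id.prodMk continuous_const)).dist continuous_const
    have h0 : dist ((1:G) • x₀) x₀ < ε/4 := by simp; linarith
    exact (hc.continuousAt (x := (1:G))).eventually_lt_const h0
  have h2 : ∀ y₀ : Y, ∀ᶠ g : G in 𝓝 1, dist (g • y₀) y₀ < ε/4 := by
    intro y₀
    have hc : Continuous fun g : G => dist (g • y₀) y₀ :=
      (hcontY.comp (continuous_id.prodMk continuous_const)).dist continuous_const
    have h0 : dist ((1:G) • y₀) y₀ < ε/4 := by simp; linarith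
    exact (hc.continuousAt (x := (1:G))).eventually_lt_const h0
  have hUmem : {g : G | (∀ x₀ ∈ X₀, dist (g • x₀) x₀ < ε/4) ∧
      (∀ y₀ ∈ Y₀, dist (g • y₀) y₀ < ε/4)} ∈ 𝓝 (1:G) := by
    have hA : ∀ᶠ g : G in 𝓝 1, ∀ x₀ ∈ X₀, dist (g • x₀) x₀ < ε/4 :=
      Filter.eventually_all_finset X₀ |>.2 fun x₀ _ => h1 x₀
    have hB : ∀ᶠ g : G in 𝓝 1, ∀ y₀ ∈ Y₀, dist (g • y₀) y₀ < ε/4 :=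
      Filter.eventually_all_finset Y₀ |>.2 fun y₀ _ => h2 y₀
    exact hA.and hB
  obtain ⟨F, hF⟩ := hRoelcke _ hUmem
  refine ⟨(X₀ ×ˢ (F ×ˢ Y₀)).image (fun p => (p.1, p.2.1⁻¹ • p.2.2)), ?_⟩
  rintro ⟨x, y⟩
  obtain ⟨x₀, hx₀, g, hg⟩ := hX₀ x
  obtain ⟨y₀, hy₀, h, hh⟩ := hY₀ y
  obtain ⟨u, hu, f, hf, v, hv, huv⟩ := hF (h * g⁻¹)
  refine ⟨(x₀, f⁻¹ • y₀), Finset.mem_image.2 ⟨(x₀, (f, y₀)), by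
    simp [Finset.mem_product, hx₀, hf, hy₀], rfl⟩, v * g, ?_⟩
  have e1 : dist ((v*g) • x) x₀ < ε/2 := by
    have t1 : dist ((v*g) • x) (v • x₀) = dist (g • x) x₀ := by
      rw [mul_smul, hisoX]
    calc dist ((v*g) • x) x₀ ≤ dist ((v*g) • x) (v • x₀) + dist (v • x₀) x₀ :=
          dist_triangle _ _ _
      _ < ε/4 + ε/4 := add_lt_add (t1 ▸ hg) (hv.1 x₀ hx₀)
      _ = ε/2 := by ring
  have e2 : dist ((v*g) • y) (f⁻¹ • y₀) < ε/2 := by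
    have key : f * (v * g) = u⁻¹ * h := by
      have : h = u * f * v * g := by
        rw [show u * f * v * g = (u * f * v) * g from by group, ← huv]; group
      rw [this]; group
    have t1 : dist ((v*g) • y) (f⁻¹ • y₀) = dist ((u⁻¹ * h) • y) y₀ := by
      rw [← hisoY f ((v*g) • y) (f⁻¹ • y₀), smul_inv_smul, ← mul_smul, key]
    have t2 : dist (u⁻¹ • y₀) y₀ = dist (u • y₀) y₀ := by
      rw [← hisoY u (u⁻¹ • y₀) y₀, smul_inv_smul, dist_comm]
    calc dist ((v*g) • y) (f⁻¹ • y₀) = dist ((u⁻¹ * h) • y) y₀ := t1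
      _ ≤ dist ((u⁻¹ * h) • y) (u⁻¹ • y₀) + dist (u⁻¹ • y₀) y₀ := dist_triangle _ _ _
      _ = dist (h • y) y₀ + dist (u • y₀) y₀ := by rw [mul_smul, hisoY, t2]
      _ < ε/4 + ε/4 := add_lt_add hh (hu.2 y₀ hy₀)
      _ = ε/2 := by ring
  calc dist ((v*g) • x) x₀ + dist ((v*g) • y) (f⁻¹ • y₀) < ε/2 + ε/2 := add_lt_add e1 e2
    _ = ε := by ring
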